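/- Let S = k[X1, X2, ..., Xn] (n ≥ 1) be the polynomial ring over a field k and set R = k[{X_i X_j : 1 ≤ i ≤ j ≤ n} ∪ {X_i³ : 1 ≤ i ≤ n}] ⊆ S. Then R is strictly closed (in its integral closure R̄ = S), and R ≠ R̄. -/

import Mathlib

set_option maxHeartbeats 1000000
set_option synthInstance.maxHeartbeats 1000000


open scoped TensorProduct

open MvPolynomial

/-- `R` is strictly closed in the `R`-algebra `S`. -/
def IsStrictlyClosedIn (R S : Type*) [CommRing R] [CommRing S] [Algebra R S] : Prop :=
  ∀ s : S, s ⊗ₜ[R] (1 : S) = (1 : S) ⊗ₜ[R] s → s ∈ (algebraMap R S).range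

/-- `R` is strictly closed (in the integral closure `R̄` of `R` in its total ring of
fractions `Q(R)`). -/
def IsStrictlyClosed (R : Type*) [CommRing R] : Prop :=
  IsStrictlyClosedIn R (integralClosure R (FractionRing R))

/-- `R = k[{XᵢXⱼ : 1 ≤ i ≤ j ≤ n} ∪ {Xᵢ³ : 1 ≤ i ≤ n}]` inside `S = k[X₁, …, Xₙ]`. -/
noncomputable def squaresCubesAlg (k : Type*) [Field k] (n : ℕ) :
    Subalgebra k (MvPolynomial (Fin n) k) :=
  Algebra.adjoin k
    ({p | ∃ i j : Fin n, p = X i * X j} ∪ {p | ∃ i : Fin n, p = X i ^ 3})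

namespace SCAux

variable {k : Type*} [Field k] {n : ℕ}

/-- total degree of an exponent vector -/
def wdeg {n : ℕ} (b : Fin n →₀ ℕ) : ℕ := ∑ i, b i

theorem wdeg_add (a b : Fin n →₀ ℕ) : wdeg (a + b) = wdeg a + wdeg b := by
  simp [wdeg, Finset.sum_add_distrib]

theorem wdeg_single (i : Fin n) (m : ℕ) : wdeg (Finsupp.single i m) = m := by
  simp [wdeg, Finsupp.single_apply]

theorem wdeg_eq_zero {b : Fin n →₀ ℕ} (h : wdeg b = 0) : b = 0 := by
  ext i
  have := Finset.sum_eq_zero_iff.mp h i (Finset.mem_univ i)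
  simpa using this

theorem exists_pos {b : Fin n →₀ ℕ} (h : wdeg b ≠ 0) : ∃ i, 1 ≤ b i := by
  by_contra hc
  push_neg at hc
  exact h (Finset.sum_eq_zero fun i _ => by have := hc i; omega)

/-- the exponent vectors of monomials belonging to `R` -/
def Good {n : ℕ} (b : Fin n →₀ ℕ) : Prop := Even (wdeg b) ∨ ∃ i, 3 ≤ b i

theorem good_add {a b : Fin n →₀ ℕ} (ha : Good a) (hb : Good b) : Good (a + b) := by
  rcases ha with ha | ⟨i, hi⟩
  · rcases hb with hb | ⟨i, hi⟩
    · exact Or.inl (by rw [wdeg_add]; exact ha.add hb)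
    · exact Or.inr ⟨i, by simp only [Finsupp.add_apply]; omega⟩
  · exact Or.inr ⟨i, by simp only [Finsupp.add_apply]; omega⟩

theorem sub_single {b : Fin n →₀ ℕ} {i : Fin n} {m : ℕ} (h : m ≤ b i) :
    b = Finsupp.single i m + (b - Finsupp.single i m) := by
  ext j
  simp only [Finsupp.add_apply, Finsupp.tsub_apply, Finsupp.single_apply]
  split_ifs with hj
  · subst hj; omega
  · omega

theorem XX_mem (i j : Fin n) : (X i * X j : MvPolynomial (Fin n) k) ∈ squaresCubesAlg k n :=
  Algebra.subset_adjoin (Or.inl ⟨i, j, rfl⟩)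

theorem X3_mem (i : Fin n) : (X i ^ 3 : MvPolynomial (Fin n) k) ∈ squaresCubesAlg k n :=
  Algebra.subset_adjoin (Or.inr ⟨i, rfl⟩)

theorem X2_mem (i : Fin n) : (X i ^ 2 : MvPolynomial (Fin n) k) ∈ squaresCubesAlg k n := by
  rw [pow_two]; exact XX_mem i i

theorem monomial_mem_aux (d : ℕ) : ∀ b : Fin n →₀ ℕ, wdeg b ≤ d → Good b → ∀ c : k,
    monomial b c ∈ squaresCubesAlg k n := by
  induction d using Nat.strong_induction_on with
  | _ d ih =>
    intro b hbd hb c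
    by_cases h0 : wdeg b = 0
    · rw [wdeg_eq_zero h0]
      have : (monomial (0 : Fin n →₀ ℕ) c) = algebraMap k (MvPolynomial (Fin n) k) c := by
        simp [MvPolynomial.algebraMap_eq]
      rw [this]
      exact Subalgebra.algebraMap_mem _ c
    by_cases heven : Even (wdeg b)
    · -- even positive degree : strip off `X i * X j`
      obtain ⟨i, hi⟩ := exists_pos h0
      set b' := b - Finsupp.single i 1 with hb'def
      have hb1 : b = Finsupp.single i 1 + b' := sub_single hi
      have hwb' : wdeg b = 1 + wdeg b' := by rw [hb1, wdeg_add, wdeg_single]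
      have h0' : wdeg b' ≠ 0 := by
        intro hz
        rw [Nat.even_iff] at heven
        omega
      obtain ⟨j, hj⟩ := exists_pos h0'
      set b'' := b' - Finsupp.single j 1 with hb''def
      have hb2 : b' = Finsupp.single j 1 + b'' := sub_single hj
      have hwb'' : wdeg b = 2 + wdeg b'' := by
        rw [hwb', hb2, wdeg_add, wdeg_single]; omega
      have hb3 : b = (Finsupp.single i 1 + Finsupp.single j 1) + b'' := by
        rw [hb1, hb2, add_assoc]
      have hgood : Good b'' := by
        left
        rw [Nat.even_iff] at heven ⊢
        omega
      have hmem : monomial b'' c ∈ squaresCubesAlg k n :=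
        ih (d - 1) (by omega) b'' (by omega) hgood c
      have heq : monomial b c = (X i * X j) * monomial b'' c := by
        rw [X, X, monomial_mul, monomial_mul, one_mul, one_mul, ← hb3]
      rw [heq]
      exact mul_mem (XX_mem i j) hmem
    · -- odd degree : strip off `X i ^ 3`
      obtain ⟨i, hi⟩ : ∃ i, 3 ≤ b i := hb.resolve_left heven
      set b'' := b - Finsupp.single i 3 with hb''def
      have hb1 : b = Finsupp.single i 3 + b'' := sub_single hi
      have hwb'' : wdeg b = 3 + wdeg b'' := by rw [hb1, wdeg_add, wdeg_single]
      have hgood : Good b'' := by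
        left
        rw [Nat.even_iff] at heven ⊢
        omega
      have hmem : monomial b'' c ∈ squaresCubesAlg k n :=
        ih (d - 1) (by omega) b'' (by omega) hgood c
      have heq : monomial b c = (X i ^ 3) * monomial b'' c := by
        rw [X_pow_eq_monomial, monomial_mul, one_mul, ← hb1]
      rw [heq]
      exact mul_mem (X3_mem i) hmem

theorem monomial_mem {b : Fin n →₀ ℕ} (hb : Good b) (c : k) :
    monomial b c ∈ squaresCubesAlg k n :=
  monomial_mem_aux (wdeg b) b le_rfl hb c

theorem mem_of_support_good {p : MvPolynomial (Fin n) k}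
    (h : ∀ b ∈ p.support, Good b) : p ∈ squaresCubesAlg k n := by
  rw [p.as_sum]
  exact sum_mem fun b hb => monomial_mem (h b hb) _

theorem support_good {p : MvPolynomial (Fin n) k} (hp : p ∈ squaresCubesAlg k n) :
    ∀ b ∈ p.support, Good b := by
  classical
  induction hp using Algebra.adjoin_induction with
  | mem x hx =>
    rcases hx with ⟨i, j, rfl⟩ | ⟨i, rfl⟩
    · intro b hb
      rw [X, X, monomial_mul, one_mul] at hb
      have := MvPolynomial.support_monomial_subset hb
      rw [Finset.mem_singleton] at this
      subst this
      exact Or.inl (by rw [wdeg_add, wdeg_single, wdeg_single]; exact ⟨1, rfl⟩)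
    · intro b hb
      rw [X_pow_eq_monomial] at hb
      have := MvPolynomial.support_monomial_subset hb
      rw [Finset.mem_singleton] at this
      subst this
      exact Or.inr ⟨i, by simp [Finsupp.single_apply]⟩
  | algebraMap r =>
    intro b hb
    rw [MvPolynomial.algebraMap_eq, MvPolynomial.C_apply] at hb
    have := MvPolynomial.support_monomial_subset hb
    rw [Finset.mem_singleton] at this
    subst this
    exact Or.inl (by rw [wdeg]; simp)
  | add x y hx hy ihx ihy =>
    intro b hb
    rcases Finset.mem_union.mp (MvPolynomial.support_add hb) with h | h
    · exact ihx b h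
    · exact ihy b h
  | mul x y hx hy ihx ihy =>
    intro b hb
    have := MvPolynomial.support_mul x y hb
    rw [Finset.mem_add] at this
    obtain ⟨u, hu, v, hv, rfl⟩ := this
    exact good_add (ihx u hu) (ihy v hv)

theorem mul_X3_mem (p : MvPolynomial (Fin n) k) (i : Fin n) :
    X i ^ 3 * p ∈ squaresCubesAlg k n := by
  rw [p.as_sum, Finset.mul_sum]
  refine sum_mem fun b _ => ?_
  rw [X_pow_eq_monomial, monomial_mul, one_mul]
  refine monomial_mem (Or.inr ⟨i, ?_⟩) _
  simp [Finsupp.single_apply]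

theorem ne_top (hn : 1 ≤ n) : squaresCubesAlg k n ≠ ⊤ := by
  intro h
  have hX : (X (⟨0, hn⟩ : Fin n) : MvPolynomial (Fin n) k) ∈ squaresCubesAlg k n := by
    rw [h]; trivial
  have := support_good hX (Finsupp.single ⟨0, hn⟩ 1) (by rw [support_X]; simp)
  rcases this with h1 | ⟨i, hi⟩
  · rw [wdeg_single, Nat.even_iff] at h1
    omega
  · rw [Finsupp.single_apply] at hi
    split_ifs at hi <;> omega

section StrictClosureInS

theorem wdeg_zero : wdeg (0 : Fin n →₀ ℕ) = 0 := by simp [wdeg]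

open Classical in
/-- the "odd total degree part" projection -/
noncomputable def podd (x : MvPolynomial (Fin n) k) : MvPolynomial (Fin n) k :=
  AddMonoidAlgebra.ofCoeff (Finsupp.filter (fun d => Odd (wdeg d)) (AddMonoidAlgebra.coeff x))

theorem coeff_podd_of_odd {d : Fin n →₀ ℕ} (h : Odd (wdeg d)) (x : MvPolynomial (Fin n) k) :
    coeff d (podd x) = coeff d x := by
  classical
  show Finsupp.filter (fun d => Odd (wdeg d)) (AddMonoidAlgebra.coeff x) d = _
  rw [Finsupp.filter_apply, if_pos h]
  rfl

theorem coeff_podd_of_even {d : Fin n →₀ ℕ} (h : ¬ Odd (wdeg d)) (x : MvPolynomial (Fin n) k) :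
    coeff d (podd x) = 0 := by
  classical
  show Finsupp.filter (fun d => Odd (wdeg d)) (AddMonoidAlgebra.coeff x) d = _
  rw [Finsupp.filter_apply, if_neg h]

theorem podd_add (x y : MvPolynomial (Fin n) k) : podd (x + y) = podd x + podd y := by
  ext d
  by_cases h : Odd (wdeg d)
  · rw [coeff_add, coeff_podd_of_odd h, coeff_podd_of_odd h, coeff_podd_of_odd h, coeff_add]
  · rw [coeff_add, coeff_podd_of_even h, coeff_podd_of_even h, coeff_podd_of_even h, add_zero]

theorem podd_zero : podd (0 : MvPolynomial (Fin n) k) = 0 := by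
  ext d
  by_cases h : Odd (wdeg d)
  · rw [coeff_podd_of_odd h]
  · rw [coeff_podd_of_even h, coeff_zero]

theorem podd_one : podd (1 : MvPolynomial (Fin n) k) = 0 := by
  classical
  ext d
  by_cases h : Odd (wdeg d)
  · rw [coeff_podd_of_odd h, coeff_zero, MvPolynomial.coeff_one]
    split_ifs with h0
    · rw [← h0, wdeg_zero] at h
      simp [Nat.odd_iff] at h
    · rfl
  · rw [coeff_podd_of_even h, coeff_zero]

theorem podd_smul (c : k) (x : MvPolynomial (Fin n) k) : podd (c • x) = c • podd x := by
  ext d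
  by_cases h : Odd (wdeg d)
  · rw [coeff_podd_of_odd h, MvPolynomial.coeff_smul, MvPolynomial.coeff_smul,
      coeff_podd_of_odd h]
  · rw [coeff_podd_of_even h, MvPolynomial.coeff_smul, coeff_podd_of_even h, smul_zero]

theorem podd_monomial_mul {g : Fin n →₀ ℕ} (hg : Even (wdeg g)) (x : MvPolynomial (Fin n) k) :
    podd (monomial g 1 * x) = monomial g 1 * podd x := by
  classical
  ext d
  have hpar : ∀ hle : g ≤ d, (Odd (wdeg (d - g)) ↔ Odd (wdeg d)) := by
    intro hle
    have hdg : wdeg d = wdeg (d - g) + wdeg g := by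
      conv_lhs => rw [← tsub_add_cancel_of_le hle]
      rw [wdeg_add]
    rw [Nat.even_iff] at hg
    rw [Nat.odd_iff, Nat.odd_iff]
    omega
  by_cases h : Odd (wdeg d)
  · rw [coeff_podd_of_odd h, coeff_monomial_mul', coeff_monomial_mul']
    split_ifs with hle
    · rw [coeff_podd_of_odd ((hpar hle).mpr h)]
    · rfl
  · rw [coeff_podd_of_even h, coeff_monomial_mul']
    split_ifs with hle
    · rw [coeff_podd_of_even (fun ho => h ((hpar hle).mp ho)), mul_zero]
    · rfl

theorem coeff_mul_eq_zero_of_three_le {z y : MvPolynomial (Fin n) k} {b : Fin n →₀ ℕ}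
    {i : Fin n} (hz : ∀ u ∈ z.support, 3 ≤ u i) (hb : b i ≤ 2) : coeff b (z * y) = 0 := by
  classical
  rw [MvPolynomial.coeff_mul]
  refine Finset.sum_eq_zero fun uv huv => ?_
  rw [Finset.HasAntidiagonal.mem_antidiagonal] at huv
  by_cases hu : uv.1 ∈ z.support
  · have h3 := hz uv.1 hu
    have : uv.1 i + uv.2 i = b i := by rw [← Finsupp.add_apply, huv]
    omega
  · rw [MvPolynomial.notMem_support_iff] at hu
    rw [hu, zero_mul]

theorem support_monomial3_mul {x : MvPolynomial (Fin n) k} {i : Fin n} {u : Fin n →₀ ℕ}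
    (hu : u ∈ (monomial (Finsupp.single i 3) (1 : k) * x).support) : 3 ≤ u i := by
  classical
  have := MvPolynomial.support_mul _ x hu
  rw [Finset.mem_add] at this
  obtain ⟨a, ha, v, _, rfl⟩ := this
  have := MvPolynomial.support_monomial_subset ha
  rw [Finset.mem_singleton] at this
  subst this
  simp [Finsupp.single_apply]

theorem support_podd_subset (x : MvPolynomial (Fin n) k) :
    (podd x).support ⊆ x.support := by
  intro u hu
  rw [MvPolynomial.mem_support_iff] at hu ⊢
  intro hx
  by_cases h : Odd (wdeg u)
  · rw [coeff_podd_of_odd h] at hu; exact hu hx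
  · rw [coeff_podd_of_even h x] at hu; exact hu rfl

/-- The balanced bilinear form used to detect the coefficient of a "bad" monomial. -/
noncomputable def Bmap (b : Fin n →₀ ℕ) :
    MvPolynomial (Fin n) k →+ MvPolynomial (Fin n) k →+ k where
  toFun x :=
    { toFun := fun y => coeff b (podd x * y)
      map_zero' := by show coeff b (podd x * 0) = 0; rw [mul_zero, coeff_zero]
      map_add' := fun y z => by
        show coeff b (podd x * (y + z)) = coeff b (podd x * y) + coeff b (podd x * z)
        rw [mul_add, coeff_add] }
  map_zero' := by
    refine AddMonoidHom.ext fun y => ?_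
    show coeff b (podd 0 * y) = 0
    rw [podd_zero, zero_mul, coeff_zero]
  map_add' := fun x x' => by
    refine AddMonoidHom.ext fun y => ?_
    show coeff b (podd (x + x') * y) = coeff b (podd x * y) + coeff b (podd x' * y)
    rw [podd_add, add_mul, coeff_add]

theorem Bmap_apply (b : Fin n →₀ ℕ) (x y : MvPolynomial (Fin n) k) :
    Bmap b x y = coeff b (podd x * y) := rfl

theorem balance {b : Fin n →₀ ℕ} (hb : ∀ i, b i ≤ 2) {p : MvPolynomial (Fin n) k}
    (hp : p ∈ squaresCubesAlg k n) :
    ∀ x y : MvPolynomial (Fin n) k,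
      coeff b (podd (p * x) * y) = coeff b (podd x * (p * y)) := by
  induction hp using Algebra.adjoin_induction with
  | mem q hq =>
    rcases hq with ⟨i, j, rfl⟩ | ⟨i, rfl⟩
    · intro x y
      have hXX : (X i * X j : MvPolynomial (Fin n) k)
          = monomial (Finsupp.single i 1 + Finsupp.single j 1) 1 := by
        rw [X, X, monomial_mul, one_mul]
      have hg : Even (wdeg (Finsupp.single i 1 + Finsupp.single j 1)) := by
        rw [wdeg_add, wdeg_single, wdeg_single]
        exact ⟨1, rfl⟩
      rw [hXX, podd_monomial_mul hg]
      congr 1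
      ring
    · intro x y
      have hX3 : (X i ^ 3 : MvPolynomial (Fin n) k) = monomial (Finsupp.single i 3) 1 :=
        X_pow_eq_monomial
      rw [hX3]
      have h1 : coeff b (podd (monomial (Finsupp.single i 3) 1 * x) * y) = 0 := by
        refine coeff_mul_eq_zero_of_three_le (i := i) ?_ (hb i)
        intro u hu
        exact support_monomial3_mul (support_podd_subset _ hu)
      have h2 : coeff b (podd x * (monomial (Finsupp.single i 3) 1 * y)) = 0 := by
        rw [show podd x * (monomial (Finsupp.single i 3) 1 * y)
            = monomial (Finsupp.single i 3) 1 * (podd x * y) by ring]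
        refine coeff_mul_eq_zero_of_three_le (i := i) ?_ (hb i)
        intro u hu
        have := MvPolynomial.support_monomial_subset hu
        rw [Finset.mem_singleton] at this
        subst this
        simp [Finsupp.single_apply]
      rw [h1, h2]
  | algebraMap c =>
    intro x y
    rw [MvPolynomial.algebraMap_eq, ← MvPolynomial.smul_eq_C_mul, ← MvPolynomial.smul_eq_C_mul,
      podd_smul, smul_mul_assoc, mul_smul_comm, MvPolynomial.coeff_smul]
  | add p q hp hq ihp ihq =>
    intro x y
    rw [add_mul, add_mul, podd_add, add_mul, mul_add, coeff_add, coeff_add, ihp, ihq]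
  | mul p q hp hq ihp ihq =>
    intro x y
    calc coeff b (podd (p * q * x) * y) = coeff b (podd (p * (q * x)) * y) := by
          rw [mul_assoc]
      _ = coeff b (podd (q * x) * (p * y)) := ihp _ _
      _ = coeff b (podd x * (q * (p * y))) := ihq _ _
      _ = coeff b (podd x * (p * q * y)) := by congr 1; ring

theorem strictlyClosedIn_S :
    IsStrictlyClosedIn (squaresCubesAlg k n) (MvPolynomial (Fin n) k) := by
  intro s hs
  suffices hsupp : ∀ b ∈ s.support, Good b by
    refine ⟨⟨s, mem_of_support_good hsupp⟩, ?_⟩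
    rfl
  intro b hb
  by_contra hbad
  have hodd : Odd (wdeg b) := Nat.not_even_iff_odd.mp (fun h => hbad (Or.inl h))
  have hb2 : ∀ i, b i ≤ 2 := by
    intro i
    by_contra hlt
    push_neg at hlt
    exact hbad (Or.inr ⟨i, by omega⟩)
  have hbal : ∀ (r : squaresCubesAlg k n) (x y : MvPolynomial (Fin n) k),
      Bmap b (r • x) y = Bmap b x (r • y) := by
    intro r x y
    have hx : r • x = (r : MvPolynomial (Fin n) k) * x := by
      rw [Subalgebra.smul_def, smul_eq_mul]
    have hy : r • y = (r : MvPolynomial (Fin n) k) * y := by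
      rw [Subalgebra.smul_def, smul_eq_mul]
    rw [Bmap_apply, Bmap_apply, hx, hy]
    exact balance hb2 r.2 x y
  have hkey := congrArg (TensorProduct.liftAddHom (Bmap b) hbal) hs
  rw [TensorProduct.liftAddHom_tmul, TensorProduct.liftAddHom_tmul] at hkey
  have h1 : Bmap b s 1 = coeff b s := by
    rw [Bmap_apply, mul_one, coeff_podd_of_odd hodd]
  have h2 : Bmap b (1 : MvPolynomial (Fin n) k) s = 0 := by
    rw [Bmap_apply, podd_one, zero_mul, coeff_zero]
  rw [h1, h2] at hkey
  exact (MvPolynomial.mem_support_iff.mp hb) hkey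

end StrictClosureInS

section Closure

theorem isIntegral_S (y : MvPolynomial (Fin n) k) :
    IsIntegral (squaresCubesAlg k n) y := by
  induction y using MvPolynomial.induction_on with
  | C c =>
    have hmem : (C c : MvPolynomial (Fin n) k) ∈ squaresCubesAlg k n := by
      rw [← MvPolynomial.algebraMap_eq]
      exact Subalgebra.algebraMap_mem _ c
    have : (C c : MvPolynomial (Fin n) k)
        = algebraMap (squaresCubesAlg k n) (MvPolynomial (Fin n) k) ⟨C c, hmem⟩ := rfl
    rw [this]
    exact isIntegral_algebraMap
  | add p q hp hq => exact hp.add hq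
  | mul_X p i hp =>
    refine hp.mul ?_
    refine ⟨Polynomial.X ^ 3 - Polynomial.C (⟨X i ^ 3, X3_mem i⟩ : squaresCubesAlg k n),
      Polynomial.monic_X_pow_sub_C _ (by norm_num), ?_⟩
    have : (algebraMap (squaresCubesAlg k n) (MvPolynomial (Fin n) k))
        ⟨X i ^ 3, X3_mem i⟩ = X i ^ 3 := rfl
    simp [Polynomial.eval₂_sub, this]

theorem frac_and_closure (hn : 1 ≤ n) (K : Type*) [Field K]
    [Algebra (MvPolynomial (Fin n) k) K] [IsFractionRing (MvPolynomial (Fin n) k) K]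
    [Algebra (squaresCubesAlg k n) K]
    (hcomp : algebraMap (squaresCubesAlg k n) K
      = (algebraMap (MvPolynomial (Fin n) k) K).comp (squaresCubesAlg k n).val.toRingHom) :
    IsFractionRing (squaresCubesAlg k n) K ∧
      (integralClosure (squaresCubesAlg k n) K : Set K)
        = Set.range (algebraMap (MvPolynomial (Fin n) k) K) := by
  have injS : Function.Injective (algebraMap (MvPolynomial (Fin n) k) K) :=
    IsFractionRing.injective _ _
  have hval : ∀ r : squaresCubesAlg k n,
      algebraMap (squaresCubesAlg k n) K r
        = algebraMap (MvPolynomial (Fin n) k) K (r : MvPolynomial (Fin n) k) := by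
    intro r; rw [hcomp]; rfl
  have injR : Function.Injective (algebraMap (squaresCubesAlg k n) K) := by
    intro a b h
    rw [hval, hval] at h
    exact Subtype.ext (injS h)
  haveI tower : @IsScalarTower (squaresCubesAlg k n) (MvPolynomial (Fin n) k) K
      Algebra.toSMul Algebra.toSMul Algebra.toSMul :=
    IsScalarTower.of_algebraMap_eq (fun r => by rw [hval r]; rfl)
  constructor
  · refine ⟨?_, ?_, ?_⟩
    · intro y
      rw [isUnit_iff_ne_zero]
      intro h0
      exact (nonZeroDivisors.ne_zero y.2) (injR (by rw [h0, map_zero]))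
    · intro z
      obtain ⟨⟨p, q⟩, hz⟩ :=
        IsLocalization.surj (M := nonZeroDivisors (MvPolynomial (Fin n) k)) z
      have hq0 : (q : MvPolynomial (Fin n) k) ≠ 0 := nonZeroDivisors.ne_zero q.2
      set i0 : Fin n := ⟨0, hn⟩
      set m : MvPolynomial (Fin n) k := X i0 ^ 3 with hm
      have hm0 : m ≠ 0 := pow_ne_zero _ (MvPolynomial.X_ne_zero i0)
      have hnum : m * p ∈ squaresCubesAlg k n := mul_X3_mem p i0
      have hden : m * (q : MvPolynomial (Fin n) k) ∈ squaresCubesAlg k n := mul_X3_mem _ i0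
      have hdenne : (⟨m * q, hden⟩ : squaresCubesAlg k n) * ⟨m * q, hden⟩ ≠ 0 := by
        intro h
        have h' : (m * (q : MvPolynomial (Fin n) k)) * (m * q) = 0 := congrArg Subtype.val h
        exact (mul_ne_zero (mul_ne_zero hm0 hq0) (mul_ne_zero hm0 hq0)) h'
      refine ⟨⟨(⟨m * p, hnum⟩ : squaresCubesAlg k n) * ⟨m * q, hden⟩,
        ⟨_, mem_nonZeroDivisors_of_ne_zero hdenne⟩⟩, ?_⟩
      rw [hval, hval]
      simp only [MulMemClass.coe_mul, map_mul]
      linear_combination (algebraMap (MvPolynomial (Fin n) k) K m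
        * algebraMap (MvPolynomial (Fin n) k) K m
        * algebraMap (MvPolynomial (Fin n) k) K q) * hz
    · intro x y h
      exact ⟨1, by rw [injR h]⟩
  · ext z
    simp only [SetLike.mem_coe, Set.mem_range]
    constructor
    · intro hz
      have hz' : IsIntegral (squaresCubesAlg k n) z := hz
      have hzS : IsIntegral (MvPolynomial (Fin n) k) z :=
        IsIntegral.tower_top (A := MvPolynomial (Fin n) k) hz'
      exact IsIntegrallyClosed.isIntegral_iff.mp hzS
    · rintro ⟨y, rfl⟩
      have hy : IsIntegral (squaresCubesAlg k n) y := isIntegral_S y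
      exact IsIntegral.algebraMap hy

end Closure

section Transfer

theorem transfer {R A B : Type*} [CommRing R] [CommRing A] [CommRing B]
    [Algebra R A] [Algebra R B] (e : A ≃ₐ[R] B) (h : IsStrictlyClosedIn R A) :
    IsStrictlyClosedIn R B := by
  intro s hs
  have hmap := congrArg
    (Algebra.TensorProduct.map e.symm.toAlgHom e.symm.toAlgHom) hs
  simp only [Algebra.TensorProduct.map_tmul, map_one, AlgEquiv.toAlgHom_eq_coe,
    AlgHom.coe_coe] at hmap
  obtain ⟨r, hr⟩ := h (e.symm s) hmap
  refine ⟨r, ?_⟩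
  have he := congrArg e hr
  rwa [AlgEquiv.commutes, AlgEquiv.apply_symm_apply] at he

variable (k n) in
/-- the canonical embedding of `S` into a field containing `R`. -/
noncomputable def fmapF (F : Type*) [Field F] [Algebra (squaresCubesAlg k n) F] :
    MvPolynomial (Fin n) k →+* F :=
  eval₂Hom ((algebraMap (squaresCubesAlg k n) F).comp (algebraMap k (squaresCubesAlg k n)))
    (fun i => algebraMap (squaresCubesAlg k n) F ⟨X i ^ 3, X3_mem i⟩
      / algebraMap (squaresCubesAlg k n) F ⟨X i ^ 2, X2_mem i⟩)

variable {F : Type*} [Field F] [Algebra (squaresCubesAlg k n) F]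

theorem fmapF_nonzero (hinj : Function.Injective (algebraMap (squaresCubesAlg k n) F))
    (i : Fin n) (e : ℕ) (hmem : X i ^ e ∈ squaresCubesAlg k n) :
    algebraMap (squaresCubesAlg k n) F ⟨X i ^ e, hmem⟩ ≠ 0 := by
  intro h0
  have h1 : (⟨X i ^ e, hmem⟩ : squaresCubesAlg k n) = 0 := hinj (by rw [h0, map_zero])
  have h2 : (X i : MvPolynomial (Fin n) k) ^ e = 0 := congrArg Subtype.val h1
  exact pow_ne_zero _ (MvPolynomial.X_ne_zero i) h2

theorem fmapF_R (hinj : Function.Injective (algebraMap (squaresCubesAlg k n) F)) :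
    ∀ p : MvPolynomial (Fin n) k, ∀ hp : p ∈ squaresCubesAlg k n,
      fmapF k n F p = algebraMap (squaresCubesAlg k n) F ⟨p, hp⟩ := by
  have hfX : ∀ i : Fin n, fmapF k n F (X i)
      = algebraMap (squaresCubesAlg k n) F ⟨X i ^ 3, X3_mem i⟩
        / algebraMap (squaresCubesAlg k n) F ⟨X i ^ 2, X2_mem i⟩ :=
    fun i => eval₂Hom_X' _ _ i
  intro p hp
  induction hp using Algebra.adjoin_induction with
  | mem q hq =>
    rcases hq with ⟨i, j, rfl⟩ | ⟨i, rfl⟩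
    · rw [map_mul, hfX, hfX]
      rw [div_mul_div_comm,
        div_eq_iff (mul_ne_zero (fmapF_nonzero hinj i 2 (X2_mem i))
          (fmapF_nonzero hinj j 2 (X2_mem j))),
        ← map_mul, ← map_mul, ← map_mul]
      congr 1
      refine Subtype.ext ?_
      push_cast
      ring
    · rw [map_pow, hfX]
      rw [div_pow, div_eq_iff (pow_ne_zero 3 (fmapF_nonzero hinj i 2 (X2_mem i))),
        ← map_pow, ← map_pow, ← map_mul]
      congr 1
      refine Subtype.ext ?_
      push_cast
      ring
  | algebraMap c =>
    have h1 : fmapF k n F (algebraMap k (MvPolynomial (Fin n) k) c)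
        = algebraMap (squaresCubesAlg k n) F (algebraMap k (squaresCubesAlg k n) c) := by
      rw [MvPolynomial.algebraMap_eq]
      exact eval₂Hom_C _ _ c
    rw [h1]
    congr 1
  | add p q hp hq ihp ihq =>
    rw [map_add, ihp, ihq, ← map_add]
    congr 1
  | mul p q hp hq ihp ihq =>
    rw [map_mul, ihp, ihq, ← map_mul]
    congr 1

theorem fmapF_injective (hn : 1 ≤ n)
    (hinj : Function.Injective (algebraMap (squaresCubesAlg k n) F)) :
    Function.Injective (fmapF k n F) := by
  rw [injective_iff_map_eq_zero]
  intro p hp0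
  have hmem := mul_X3_mem p (⟨0, hn⟩ : Fin n)
  have h2 : fmapF k n F (X (⟨0, hn⟩ : Fin n) ^ 3 * p) = 0 := by rw [map_mul, hp0, mul_zero]
  rw [fmapF_R hinj _ hmem] at h2
  have h0 : (⟨X (⟨0, hn⟩ : Fin n) ^ 3 * p, hmem⟩ : squaresCubesAlg k n) = 0 :=
    hinj (by rw [h2, map_zero])
  have h3 : X (⟨0, hn⟩ : Fin n) ^ 3 * p = 0 := congrArg Subtype.val h0
  rcases mul_eq_zero.mp h3 with h | h
  · exact absurd h (pow_ne_zero _ (MvPolynomial.X_ne_zero _))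
  · exact h

theorem isFractionRing_fmapF (hn : 1 ≤ n) [IsFractionRing (squaresCubesAlg k n) F] :
    @IsFractionRing (MvPolynomial (Fin n) k) _ F _ (fmapF k n F).toAlgebra := by
  letI : Algebra (MvPolynomial (Fin n) k) F := (fmapF k n F).toAlgebra
  have hinj : Function.Injective (algebraMap (squaresCubesAlg k n) F) :=
    IsFractionRing.injective _ _
  have injf : Function.Injective (fmapF k n F) := fmapF_injective hn hinj
  refine ⟨?_, ?_, ?_⟩
  · intro y
    rw [isUnit_iff_ne_zero]
    intro h0
    have h0' : fmapF k n F (y : MvPolynomial (Fin n) k) = 0 := h0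
    exact (nonZeroDivisors.ne_zero y.2) (injf (by rw [h0', map_zero]))
  · intro z
    obtain ⟨⟨r1, r2⟩, hz⟩ :=
      IsLocalization.surj (M := nonZeroDivisors (squaresCubesAlg k n)) z
    have hr2ne : ((r2 : squaresCubesAlg k n) : MvPolynomial (Fin n) k) ≠ 0 := by
      intro h
      exact (nonZeroDivisors.ne_zero r2.2) (Subtype.ext h)
    refine ⟨⟨((r1 : squaresCubesAlg k n) : MvPolynomial (Fin n) k),
      ⟨_, mem_nonZeroDivisors_of_ne_zero hr2ne⟩⟩, ?_⟩
    show z * fmapF k n F ((r2 : squaresCubesAlg k n) : MvPolynomial (Fin n) k)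
        = fmapF k n F ((r1 : squaresCubesAlg k n) : MvPolynomial (Fin n) k)
    rw [fmapF_R hinj _ ((r2 : squaresCubesAlg k n)).2, fmapF_R hinj _ ((r1 : squaresCubesAlg k n)).2]
    exact hz
  · intro x y h
    exact ⟨1, by rw [injf h]⟩

theorem strictlyClosedIn_closure (hn : 1 ≤ n) [IsFractionRing (squaresCubesAlg k n) F] :
    IsStrictlyClosedIn (squaresCubesAlg k n) (integralClosure (squaresCubesAlg k n) F) := by
  have hinj : Function.Injective (algebraMap (squaresCubesAlg k n) F) :=
    IsFractionRing.injective _ _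
  have injf : Function.Injective (fmapF k n F) := fmapF_injective hn hinj
  obtain ⟨-, hIC⟩ := @frac_and_closure k _ n hn F _
    (fmapF k n F).toAlgebra (isFractionRing_fmapF hn) _
    (RingHom.ext fun r => (fmapF_R hinj (r : MvPolynomial (Fin n) k) r.2).symm)
  let φ : MvPolynomial (Fin n) k →ₐ[squaresCubesAlg k n] F :=
    { toRingHom := fmapF k n F
      commutes' := fun r => by
        show fmapF k n F ((algebraMap (squaresCubesAlg k n) (MvPolynomial (Fin n) k)) r)
            = algebraMap (squaresCubesAlg k n) F r
        have h1 : (algebraMap (squaresCubesAlg k n) (MvPolynomial (Fin n) k)) r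
            = (r : MvPolynomial (Fin n) k) := rfl
        rw [h1, fmapF_R hinj _ r.2] }
  have hφmem : ∀ p, φ p ∈ integralClosure (squaresCubesAlg k n) F := by
    intro p
    have hp : fmapF k n F p ∈ (integralClosure (squaresCubesAlg k n) F : Set F) := by
      rw [hIC]
      exact ⟨p, rfl⟩
    exact hp
  let ψ := φ.codRestrict (integralClosure (squaresCubesAlg k n) F) hφmem
  have hbij : Function.Bijective ψ := by
    constructor
    · intro a b hab
      exact injf (congrArg Subtype.val hab)
    · intro c
      have hc : (c : F) ∈ (integralClosure (squaresCubesAlg k n) F : Set F) := c.2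
      rw [hIC] at hc
      obtain ⟨y, hy⟩ := hc
      exact ⟨y, Subtype.ext hy⟩
  exact transfer (AlgEquiv.ofBijective ψ hbij) strictlyClosedIn_S

theorem isStrictlyClosed (hn : 1 ≤ n) :
    IsStrictlyClosed (squaresCubesAlg k n) :=
  strictlyClosedIn_closure (F := FractionRing (squaresCubesAlg k n)) hn

end Transfer

end SCAux

set_option synthInstance.maxHeartbeats 1000000 in
set_option maxHeartbeats 1000000 in
/-- Let `S = k[X₁, …, Xₙ]` (`n ≥ 1`) and
`R = k[{XᵢXⱼ}, {Xᵢ³}] ⊆ S`.  Then the fraction field of `S` is a fraction field of `R`, the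
integral closure `R̄` of `R` in it is `S`, `R` is strictly closed, and `R ≠ R̄ = S`. -/
theorem squaresCubesAlg_strictlyClosed_ne_closure
    (k : Type*) [Field k] (n : ℕ) (hn : 1 ≤ n)
    (K : Type*) [Field K] [Algebra (MvPolynomial (Fin n) k) K]
    [IsFractionRing (MvPolynomial (Fin n) k) K] :
    (letI : Algebra (squaresCubesAlg k n) K :=
      ((algebraMap (MvPolynomial (Fin n) k) K).comp
        (squaresCubesAlg k n).val.toRingHom).toAlgebra
     IsFractionRing (squaresCubesAlg k n) K ∧
       (integralClosure (squaresCubesAlg k n) K : Set K)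
         = Set.range (algebraMap (MvPolynomial (Fin n) k) K)) ∧
    IsStrictlyClosed (squaresCubesAlg k n) ∧
    squaresCubesAlg k n ≠ ⊤ := by
  refine ⟨?_, SCAux.isStrictlyClosed hn, SCAux.ne_top hn⟩
  letI : Algebra (squaresCubesAlg k n) K :=
    ((algebraMap (MvPolynomial (Fin n) k) K).comp
      (squaresCubesAlg k n).val.toRingHom).toAlgebra
  exact SCAux.frac_and_closure (k := k) hn K rfl
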